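/- Ordering of subcubes preserving accretivity. Let μ be a Borel measure on ℝ^N which is finite on cubes, let Q ⊆ ℝ^N be an axis-parallel cube, and let b be a μ-integrable complex-valued function on Q with |∫_Q b dμ| ≥ δ μ(Q) for some δ > 0. Then the 2^N dyadic children of Q (the cubes obtained by bisecting each side of Q) can be enumerated Q_1, …, Q_{2^N} in such a way that |∫_{∪_{u=k}^{2^N} Q_u} b dμ| ≥ (1 − (k−1)2^{−N}) δ μ(Q) for every k = 1, …, 2^N. -/

import Mathlib

open MeasureTheory ENNReal

noncomputable section

/-- Euclidean space `ℝ^N`. -/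
abbrev RN (N : ℕ) := EuclideanSpace ℝ (Fin N)

/-- The axis-parallel (half-open) cube with centre `c` and side-length `l`. -/
def cube {N : ℕ} (c : RN N) (l : ℝ) : Set (RN N) :=
  {x | ∀ i, c i - l / 2 ≤ x i ∧ x i < c i + l / 2}

/-- The dyadic child of the cube with centre `c` and side-length `l` selected by
`s : Fin N → Bool` (upper or lower half in each coordinate). -/
def childCube {N : ℕ} (c : RN N) (l : ℝ) (s : Fin N → Bool) : Set (RN N) :=
  cube (WithLp.toLp 2 (fun i => c i + (if s i then l / 4 else -(l / 4)) : Fin N → ℝ)) (l / 2)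

lemma measurableSet_cube {N : ℕ} (c : RN N) (l : ℝ) : MeasurableSet (cube c l) := by
  have h : cube c l = ⋂ i, {x : RN N | c i - l/2 ≤ x i ∧ x i < c i + l/2} := by
    ext x; simp [cube, Set.mem_iInter]
  rw [h]
  exact MeasurableSet.iInter fun i =>
    ((measurableSet_le measurable_const ((measurable_pi_apply i).comp (WithLp.measurable_ofLp 2 _))).inter
      (measurableSet_lt ((measurable_pi_apply i).comp (WithLp.measurable_ofLp 2 _)) measurable_const))

lemma mem_childCube {N : ℕ} {c : RN N} {l : ℝ} {s : Fin N → Bool} {x : RN N} :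
    x ∈ childCube c l s ↔ ∀ i, if s i then c i ≤ x i ∧ x i < c i + l / 2
      else c i - l / 2 ≤ x i ∧ x i < c i := by
  unfold childCube cube
  simp only [Set.mem_setOf_eq]
  refine forall_congr' fun i => ?_
  by_cases hs : s i <;> simp [hs] <;>
    constructor <;> (intro h; exact ⟨by linarith [h.1], by linarith [h.2]⟩)

lemma childCube_subset {N : ℕ} (c : RN N) {l : ℝ} (hl : 0 ≤ l) (s : Fin N → Bool) :
    childCube c l s ⊆ cube c l := by
  intro x hx i
  have h := mem_childCube.1 hx i
  by_cases hs : s i <;> simp [hs] at h <;>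
    exact ⟨by linarith [h.1], by linarith [h.2]⟩

lemma childCube_disjoint {N : ℕ} (c : RN N) (l : ℝ) {s t : Fin N → Bool} (hst : s ≠ t) :
    Disjoint (childCube c l s) (childCube c l t) := by
  rw [Set.disjoint_left]
  intro x hs ht
  obtain ⟨i, hi⟩ := Function.ne_iff.1 hst
  have h1 := mem_childCube.1 hs i
  have h2 := mem_childCube.1 ht i
  cases hb : s i <;> cases hb' : t i <;> simp [hb, hb'] at hi h1 h2 <;>
    linarith [h1.1, h1.2, h2.1, h2.2]

lemma iUnion_childCube {N : ℕ} (c : RN N) {l : ℝ} (hl : 0 ≤ l) :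
    (⋃ s : Fin N → Bool, childCube c l s) = cube c l := by
  apply Set.Subset.antisymm
  · exact Set.iUnion_subset fun s => childCube_subset c hl s
  · intro x hx
    refine Set.mem_iUnion.2 ⟨fun i => decide (c i ≤ x i), mem_childCube.2 fun i => ?_⟩
    have h := hx i
    by_cases hc : c i ≤ x i <;> simp [hc]
    · exact h.2
    · constructor <;> linarith [h.1, lt_of_not_ge hc]

lemma tail_sum_ge {n : ℕ} (g : Fin n → ℝ) (hg : Monotone g) (k : Fin n) :
    ((n : ℝ) - k) / n * ∑ u, g u ≤ ∑ u ∈ Finset.Ici k, g u := by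
  have hn : 0 < (n : ℝ) := by exact_mod_cast k.pos
  have hsplit : ∑ u, g u = ∑ u ∈ Finset.Iio k, g u + ∑ u ∈ Finset.Ici k, g u := by
    rw [← Finset.sum_filter_add_sum_filter_not Finset.univ (fun u => u < k) g]
    congr 1 <;> (congr 1; ext u; simp)
  have hH : ∑ u ∈ Finset.Iio k, g u ≤ (k : ℕ) * g k := by
    calc ∑ u ∈ Finset.Iio k, g u ≤ (Finset.Iio k).card • g k :=
          Finset.sum_le_card_nsmul _ _ _ fun u hu => hg (le_of_lt (Finset.mem_Iio.1 hu))
      _ = (k : ℕ) * g k := by simp [nsmul_eq_mul]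
  have hT : ((n - k : ℕ) : ℝ) * g k ≤ ∑ u ∈ Finset.Ici k, g u := by
    calc ((n - k : ℕ) : ℝ) * g k = (Finset.Ici k).card • g k := by simp [nsmul_eq_mul]
      _ ≤ ∑ u ∈ Finset.Ici k, g u :=
          Finset.card_nsmul_le_sum _ _ _ fun u hu => hg (Finset.mem_Ici.1 hu)
  have hkn : ((n - k : ℕ) : ℝ) = (n : ℝ) - k := by
    rw [Nat.cast_sub k.isLt.le]
  rw [hkn] at hT
  have hk0 : (0 : ℝ) ≤ (k : ℕ) := Nat.cast_nonneg _
  have hkn' : ((k : ℕ) : ℝ) < n := by exact_mod_cast k.isLt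
  rw [hsplit, div_mul_eq_mul_div, div_le_iff₀ hn]
  nlinarith [hH, hT, hk0, hkn']

/-- **Ordering of subcubes preserving accretivity.** The `2^N` dyadic children of a
cube `Q` can be enumerated `Q_1, …, Q_{2^N}` so that
`|∫_{∪_{u=k}^{2^N} Q_u} b dμ| ≥ (1 − (k−1) 2^{−N}) δ μ(Q)` for all `k`. Below, the
enumeration is the bijection `e`, zero-based: `e u` is the `(u+1)`-st child. -/
theorem ordering_of_subcubes_preserving_accretivity
    (N : ℕ) (hN : 0 < N) (μ : Measure (RN N))
    (hμ : ∀ (c : RN N) (l : ℝ), μ (cube c l) < ∞)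
    (c : RN N) (l : ℝ) (hl : 0 < l)
    (b : RN N → ℂ) (hb : IntegrableOn b (cube c l) μ)
    (δ : ℝ) (hδ : 0 < δ)
    (hacc : δ * (μ (cube c l)).toReal ≤ ‖∫ x in cube c l, b x ∂μ‖) :
    ∃ e : Fin (2 ^ N) ≃ (Fin N → Bool),
      ∀ k : Fin (2 ^ N),
        (1 - (k : ℕ) * ((2 : ℝ) ^ N)⁻¹) * δ * (μ (cube c l)).toReal ≤
          ‖∫ x in ⋃ u ∈ {u : Fin (2 ^ N) | k ≤ u}, childCube c l (e u), b x ∂μ‖ := by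
  classical
  set V := ∫ x in cube c l, b x ∂μ with hVdef
  have hcard : Fintype.card (Fin N → Bool) = 2 ^ N := by simp
  set e0 : Fin (2 ^ N) ≃ (Fin N → Bool) := (Fintype.equivFinOfCardEq hcard).symm with he0
  set f : (Fin N → Bool) → ℝ :=
    fun s => ((starRingEnd ℂ) V * ∫ x in childCube c l s, b x ∂μ).re with hf
  set σ := Tuple.sort (f ∘ e0) with hσ
  refine ⟨σ.trans e0, fun k => ?_⟩
  set e : Fin (2 ^ N) ≃ (Fin N → Bool) := σ.trans e0 with he
  have hmeas : ∀ s : Fin N → Bool, MeasurableSet (childCube c l s) :=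
    fun s => measurableSet_cube _ _
  have hint : ∀ s : Fin N → Bool, IntegrableOn b (childCube c l s) μ :=
    fun s => hb.mono_set (childCube_subset c hl.le s)
  have hmono : Monotone (f ∘ e) := Tuple.monotone_sort (f ∘ e0)
  -- the tail union as a finset bi-union
  have hsetrw : (⋃ u ∈ {u : Fin (2 ^ N) | k ≤ u}, childCube c l (e u)) =
      ⋃ u ∈ Finset.Ici k, childCube c l (e u) := by
    ext x; simp [Finset.mem_Ici]
  have htail : ∫ x in ⋃ u ∈ {u : Fin (2 ^ N) | k ≤ u}, childCube c l (e u), b x ∂μ =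
      ∑ u ∈ Finset.Ici k, ∫ x in childCube c l (e u), b x ∂μ := by
    rw [hsetrw]
    exact integral_biUnion_finset _ (fun u _ => hmeas _)
      (fun u _ w _ huw => childCube_disjoint c l (fun h => huw (e.injective h)))
      (fun u _ => hint _)
  -- the full integral as a sum over all children
  have hsum : ∑ s : Fin N → Bool, ∫ x in childCube c l s, b x ∂μ = V := by
    rw [hVdef, ← iUnion_childCube c hl.le,
      show (⋃ s : Fin N → Bool, childCube c l s) = ⋃ s ∈ Finset.univ, childCube c l s by simp]
    exact (integral_biUnion_finset _ (fun s _ => hmeas _)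
      (fun s _ t _ hst => childCube_disjoint c l hst) (fun s _ => hint _)).symm
  set T := ∫ x in ⋃ u ∈ {u : Fin (2 ^ N) | k ≤ u}, childCube c l (e u), b x ∂μ with hT
  -- sum of f over all indices equals ‖V‖ ^ 2
  have hfsum : ∑ u : Fin (2 ^ N), f (e u) = ‖V‖ ^ 2 := by
    rw [Equiv.sum_comp e f, hf]
    rw [← Complex.re_sum, ← Finset.mul_sum, hsum]
    rw [mul_comm, Complex.mul_conj]
    rw [Complex.ofReal_re, Complex.normSq_eq_norm_sq]
  -- tail sum of f equals the real part of conj V * T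
  have hftail : ∑ u ∈ Finset.Ici k, f (e u) = ((starRingEnd ℂ) V * T).re := by
    rw [htail, hf]
    rw [← Complex.re_sum, ← Finset.mul_sum]
  have hkey : ((2 ^ N : ℝ) - k) / 2 ^ N * ‖V‖ ^ 2 ≤ ((starRingEnd ℂ) V * T).re := by
    rw [← hftail]
    have := tail_sum_ge (f ∘ e) hmono k
    simpa [hfsum] using this
  have hre : ((starRingEnd ℂ) V * T).re ≤ ‖V‖ * ‖T‖ := by
    calc ((starRingEnd ℂ) V * T).re ≤ ‖(starRingEnd ℂ) V * T‖ := Complex.re_le_norm _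
      _ = ‖V‖ * ‖T‖ := by rw [norm_mul, RCLike.norm_conj]
  have hμ0 : 0 ≤ (μ (cube c l)).toReal := ENNReal.toReal_nonneg
  have hk2 : ((k : ℕ) : ℝ) < 2 ^ N := by exact_mod_cast k.isLt
  have h2N : (0 : ℝ) < 2 ^ N := by positivity
  have hcoef : (0 : ℝ) ≤ 1 - (k : ℕ) * ((2 : ℝ) ^ N)⁻¹ := by
    rw [sub_nonneg, ← div_eq_mul_inv, div_le_one h2N]
    exact hk2.le
  by_cases hV0 : V = 0
  · have hμz : (μ (cube c l)).toReal = 0 := by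
      by_contra h
      have h1 : 0 < (μ (cube c l)).toReal := lt_of_le_of_ne hμ0 (Ne.symm h)
      have : (0 : ℝ) < δ * (μ (cube c l)).toReal := mul_pos hδ h1
      rw [hV0] at hacc
      simp at hacc
      linarith
    rw [hμz]
    simpa using norm_nonneg T
  · have hVpos : 0 < ‖V‖ := norm_pos_iff.2 hV0
    have hTbound : ((2 ^ N : ℝ) - k) / 2 ^ N * ‖V‖ ≤ ‖T‖ := by
      have h1 : ((2 ^ N : ℝ) - k) / 2 ^ N * ‖V‖ ^ 2 ≤ ‖V‖ * ‖T‖ := hkey.trans hre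
      rw [← mul_le_mul_iff_right₀ hVpos]
      calc ‖V‖ * (((2 ^ N : ℝ) - k) / 2 ^ N * ‖V‖) = ((2 ^ N : ℝ) - k) / 2 ^ N * ‖V‖ ^ 2 := by
            ring
        _ ≤ ‖V‖ * ‖T‖ := h1
    have hVge : δ * (μ (cube c l)).toReal ≤ ‖V‖ := hacc
    calc (1 - (k : ℕ) * ((2 : ℝ) ^ N)⁻¹) * δ * (μ (cube c l)).toReal
        = (1 - (k : ℕ) * ((2 : ℝ) ^ N)⁻¹) * (δ * (μ (cube c l)).toReal) := by ring
      _ ≤ (1 - (k : ℕ) * ((2 : ℝ) ^ N)⁻¹) * ‖V‖ :=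
          mul_le_mul_of_nonneg_left hVge hcoef
      _ = ((2 ^ N : ℝ) - k) / 2 ^ N * ‖V‖ := by
          field_simp
      _ ≤ ‖T‖ := hTbound
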